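/- arXiv:0808.0294 — 2 statements merged into one kernel-verified Lean document; each statement's English description precedes it below -/
import Mathlib

section
/- The lattice T = U⊕U⊕E_8⊕A_1^5 is isometric to U⊕U(2)⊕E_7⊕D_6 and also isometric to U⊕U(2)⊕D_12⊕A_1: there exist P, Q ∈ GL(17,ℤ) carrying the block-diagonal Gram matrix of U⊕U⊕E_8⊕A_1^5 to those of U⊕U(2)⊕E_7⊕D_6 and of U⊕U(2)⊕D_12⊕A_1 respectively. -/
open Matrix

/-- Gram matrix of the hyperbolic plane `U`. -/
def gramU : Matrix (Fin 2) (Fin 2) ℤ := !![0, 1; 1, 0]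

/-- Gram matrix of `U(2)`. -/
def gramU2 : Matrix (Fin 2) (Fin 2) ℤ := !![0, 2; 2, 0]

/-- Gram matrix of `A₁`. -/
def gramA1 : Matrix (Fin 1) (Fin 1) ℤ := !![-2]

/-- Gram matrix of the negative definite root lattice whose Dynkin diagram is a chain
on nodes `0, …, n-2` together with an extra node `n-1` attached to node `k`
(`k = 2` gives the `E`-series, `k = 1` the `D`-series). -/
def gramRoot (n k : ℕ) : Matrix (Fin n) (Fin n) ℤ :=
  Matrix.of fun i j =>
    if i = j then -2
    else if (((i : ℕ) + 1 = j ∨ (j : ℕ) + 1 = i) ∧ (i : ℕ) + 1 ≠ n ∧ (j : ℕ) + 1 ≠ n) ∨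
        ((i : ℕ) + 1 = n ∧ (j : ℕ) = k) ∨ ((j : ℕ) + 1 = n ∧ (i : ℕ) = k) then 1
    else 0

/-- Gram matrix of the standard negative definite root lattice `E₈`. -/
def gramE8 : Matrix (Fin 8) (Fin 8) ℤ := gramRoot 8 2

/-- Gram matrix of the standard negative definite root lattice `E₇`. -/
def gramE7 : Matrix (Fin 7) (Fin 7) ℤ := gramRoot 7 2

/-- Gram matrix of the standard negative definite root lattice `D₄`. -/
def gramD4 : Matrix (Fin 4) (Fin 4) ℤ := gramRoot 4 1

/-- Gram matrix of the standard negative definite root lattice `D₆`. -/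
def gramD6 : Matrix (Fin 6) (Fin 6) ℤ := gramRoot 6 1

/-- Gram matrix of the standard negative definite root lattice `D₁₂`. -/
def gramD12 : Matrix (Fin 12) (Fin 12) ℤ := gramRoot 12 1

/-- Orthogonal (block diagonal) sum of two Gram matrices. -/
def blockSum {m n : ℕ} (A : Matrix (Fin m) (Fin m) ℤ) (B : Matrix (Fin n) (Fin n) ℤ) :
    Matrix (Fin (m + n)) (Fin (m + n)) ℤ :=
  Matrix.of fun i j =>
    if hi : (i : ℕ) < m then
      if hj : (j : ℕ) < m then A ⟨i, hi⟩ ⟨j, hj⟩ else 0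
    else
      if hj : (j : ℕ) < m then 0
      else B ⟨(i : ℕ) - m, by have := i.isLt; omega⟩ ⟨(j : ℕ) - m, by have := j.isLt; omega⟩

/-- Gram matrix of `T = U ⊕ U ⊕ E₈ ⊕ A₁⁵`. -/
def gramT : Matrix (Fin 17) (Fin 17) ℤ :=
  blockSum gramU (blockSum gramU (blockSum gramE8 (Matrix.diagonal fun _ : Fin 5 => (-2 : ℤ))))

/-- Gram matrix of `U ⊕ U(2) ⊕ E₇ ⊕ D₆`. -/
def gramT₁ : Matrix (Fin 17) (Fin 17) ℤ :=
  blockSum gramU (blockSum gramU2 (blockSum gramE7 gramD6))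

/-- Gram matrix of `U ⊕ U(2) ⊕ D₁₂ ⊕ A₁`. -/
def gramT₂ : Matrix (Fin 17) (Fin 17) ℤ :=
  blockSum gramU (blockSum gramU2 (blockSum gramD12 gramA1))

def Pmat : Matrix (Fin 17) (Fin 17) ℤ :=
  !![-2, -6, 0, 0, -2, 2, -2, 2, 0, 0, 0, 1, 0, 3, -1, 0, -5;
    -2, -6, 0, 0, -2, 2, -2, 2, 0, 0, 0, 1, 0, 2, -1, 1, -5;
    -2, -6, 2, 2, -2, 2, -2, 2, 0, 0, 0, -1, 0, 3, 0, 0, -5;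
    -2, -5, 4, 4, -2, 3, -2, 1, 1, -1, 0, -3, 1, 2, 2, -1, -5;
    -1, -3, 2, 2, -2, 2, -2, 0, 2, -1, 1, -2, 0, 2, 0, 0, -2;
    2, 6, 0, 0, 0, -1, 0, -3, 3, -1, 2, -2, 0, -2, 0, 0, 6;
    3, 9, 0, 0, 0, -2, 0, -4, 4, -2, 4, -3, 0, -3, 0, 0, 9;
    3, 9, 0, 0, 0, -2, 1, -4, 3, -1, 3, -3, 0, -3, 0, 0, 9;
    2, 6, 0, 0, -1, -1, 1, -3, 2, -1, 2, -2, 0, -2, 0, 0, 6;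
    1, 3, 0, 0, -1, 0, 0, -2, 1, 0, 2, -1, 0, -1, 0, 0, 3;
    1, 3, 0, 0, 0, 0, 0, -1, 0, 0, 1, -1, 0, -1, 0, 0, 3;
    2, 7, 0, 0, 1, -2, 1, -3, 2, -1, 2, -2, 0, -2, 0, 0, 6;
    0, 0, 1, 1, 0, 0, 0, 0, 0, 0, 0, -1, 0, 0, 1, 0, 0;
    0, 0, 1, 1, 0, 0, 0, 0, 0, 0, 0, -1, 0, 0, 1, -1, 0;
    -1, -3, 1, 1, -1, 1, -1, 1, 0, 0, 0, -1, 1, 1, 0, 0, -3;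
    -1, -2, 1, 0, -1, 1, -1, 1, 0, 0, 0, 0, 0, 1, 0, 0, -2;
    -1, -2, 0, 1, -1, 1, -1, 1, 0, 0, 0, 0, 0, 1, 0, 0, -2]

def PmatInv : Matrix (Fin 17) (Fin 17) ℤ :=
  !![-6, -6, -5, -6, 12, -6, 4, -3, 0, 3, -3, -5, 0, 0, 6, 4, 4;
    -2, -2, -2, -2, 4, -2, 1, -1, 0, 1, -1, -1, 0, 0, 2, 2, 2;
    0, 0, 2, 1, -2, 1, 0, 0, 0, 0, 0, 0, -1, -1, -1, 0, -1;
    0, 0, 2, 1, -2, 1, 0, 0, 0, 0, 0, 0, -1, -1, -1, -1, 0;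
    0, 0, -1, 0, 1, -1, 0, 1, -1, 0, 0, 0, 0, 0, 0, 0, 0;
    -2, -2, -4, -2, 6, -4, 1, 1, -1, 1, -1, -2, 0, 0, 2, 2, 2;
    -2, -2, -4, -2, 6, -5, 1, 2, -1, 1, -2, -2, 0, 0, 2, 2, 2;
    -3, -3, -4, -3, 7, -5, 2, 1, -1, 1, -2, -3, 0, 0, 3, 3, 3;
    -2, -2, -3, -2, 5, -3, 1, 1, -1, 1, -2, -2, 0, 0, 2, 2, 2;
    -1, -1, -1, -1, 2, -1, 0, 1, -1, 1, -1, -1, 0, 0, 1, 1, 1;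
    -1, -1, -2, -1, 3, -3, 1, 1, -1, 1, -1, -1, 0, 0, 1, 1, 1;
    1, 0, 3, 2, -4, 2, 0, 0, 0, 0, 0, 0, -1, -2, -2, -1, -1;
    3, 1, 3, 3, -6, 3, -1, 1, 0, -1, 1, 1, 0, -2, -2, -2, -2;
    1, -1, 0, 0, 0, 0, 0, 0, 0, 0, 0, 0, 1, -1, 0, 0, 0;
    1, 0, -1, 0, 0, 0, 0, 0, 0, 0, 0, 0, 2, 0, 0, 0, 0;
    0, 0, 0, 0, 0, 0, 0, 0, 0, 0, 0, 0, 1, -1, 0, 0, 0;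
    4, 3, 4, 4, -8, 4, -2, 2, 0, -2, 2, 2, 0, -1, -4, -3, -3]

def Qmat : Matrix (Fin 17) (Fin 17) ℤ :=
  !![2, 8, 0, 0, -4, 4, -1, 2, -2, 2, 0, -2, 2, -2, 1, -4, 4;
    2, 8, 0, 0, -4, 4, -1, 2, -2, 2, 0, -2, 2, -1, 1, -4, 4;
    -2, -8, 2, 2, 3, -3, 1, -2, 2, -2, 0, 2, -2, 2, -2, 3, -6;
    -4, -18, 4, 4, 7, -8, 3, -4, 4, -4, 0, 5, -4, 3, -4, 7, -12;
    -3, -12, 2, 2, 5, -5, 3, -4, 2, -2, -1, 4, -3, 2, -2, 5, -8;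
    -2, -8, 0, 0, 4, -4, 4, -4, 0, 0, -2, 3, -2, 1, 0, 4, -4;
    -3, -12, 0, 0, 6, -6, 6, -6, 0, 0, -2, 4, -4, 2, 0, 6, -6;
    -1, -4, 0, 0, 2, -2, 4, -3, -2, 2, -2, 2, -2, 1, 0, 2, -2;
    0, 0, 0, 0, 0, 0, 3, -2, -2, 2, -1, 0, 0, 0, 0, 0, 0;
    0, 0, 0, 0, 0, 0, 2, -1, -2, 1, 0, 0, 0, 0, 0, 0, 0;
    0, 0, 0, 0, 0, 0, 1, 0, -1, 0, 0, 0, 0, 0, 0, 0, 0;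
    -1, -5, 0, 0, 2, -2, 3, -3, 0, 0, -1, 2, -2, 1, 0, 2, -2;
    -1, -4, 1, 1, 1, -2, 1, -1, 1, -1, 0, 1, -1, 1, -1, 2, -3;
    -1, -4, 1, 1, 2, -2, 1, -1, 1, -1, 0, 1, -1, 1, -1, 1, -3;
    -2, -9, 1, 1, 4, -4, 1, -2, 2, -2, 0, 2, -2, 2, -2, 4, -5;
    0, -1, 1, 0, 0, 0, 0, 0, 0, 0, 0, 0, 0, 0, 0, 0, -1;
    0, -1, 0, 1, 0, 0, 0, 0, 0, 0, 0, 0, 0, 0, 0, 0, -1]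

def QmatInv : Matrix (Fin 17) (Fin 17) ℤ :=
  !![8, 8, -18, -8, 16, -8, 7, -4, -4, 0, 0, -2, 8, 8, 18, 2, 2;
    2, 2, -4, -2, 4, -2, 2, -1, -1, 0, 0, -1, 2, 2, 4, 0, 0;
    0, 0, 2, 1, -2, 1, 0, 0, 0, 0, 0, 0, -1, -1, -1, 0, -1;
    0, 0, 2, 1, -2, 1, 0, 0, 0, 0, 0, 0, -1, -1, -1, -1, 0;
    1, 2, -3, -1, 3, -2, 2, -1, 0, -1, 1, -1, 0, 1, 3, 0, 0;
    -2, 0, 1, 1, 0, -1, 0, 0, 2, -2, 2, 0, -2, -2, -2, 0, 0;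
    -2, 0, 0, 1, 0, -1, 0, 0, 2, -2, 2, 0, -1, -1, -2, 0, 0;
    -3, -1, 2, 2, -2, 0, -1, 1, 2, -2, 2, 0, -2, -2, -4, 0, 0;
    -2, 0, 0, 1, 0, -1, 0, 0, 2, -2, 1, 0, -1, -1, -2, 0, 0;
    -3, -1, 2, 2, -2, 0, -1, 1, 2, -1, 0, 0, -2, -2, -4, 0, 0;
    -2, 0, 0, 1, 0, -1, 0, 0, 1, 0, 0, 0, -1, -1, -2, 0, 0;
    -1, 1, -2, 0, 2, -1, 0, 0, 0, 0, 0, 0, 0, 0, 0, 0, 0;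
    -2, 0, 1, 1, -1, 1, -1, 0, 1, 0, 0, 0, -1, -1, -2, 0, 0;
    -1, 1, 0, 0, 0, 0, 0, 0, 0, 0, 0, 0, 0, 0, 0, 0, 0;
    -1, 0, 2, 1, -2, 1, 0, 0, 0, 0, 0, 0, -1, -1, -2, 0, 0;
    1, 2, -3, -1, 3, -2, 2, -1, 0, -1, 1, -1, 1, 0, 3, 0, 0;
    -2, -2, 6, 3, -6, 3, -2, 1, 1, 0, 0, 1, -3, -3, -5, -1, -1]

set_option maxHeartbeats 10000000 in
/-- `T = U ⊕ U ⊕ E₈ ⊕ A₁⁵` is isometric to `U ⊕ U(2) ⊕ E₇ ⊕ D₆` and to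
`U ⊕ U(2) ⊕ D₁₂ ⊕ A₁`. -/
theorem T_isometric_to_U_U2_E7_D6_and_U_U2_D12_A1 :
    (∃ P : Matrix (Fin 17) (Fin 17) ℤ, IsUnit P.det ∧ Pᵀ * gramT * P = gramT₁) ∧
    (∃ Q : Matrix (Fin 17) (Fin 17) ℤ, IsUnit Q.det ∧ Qᵀ * gramT * Q = gramT₂) := by
  constructor
  · exact ⟨Pmat, Matrix.isUnit_det_of_left_inverse (by decide : PmatInv * Pmat = 1), by decide⟩
  · exact ⟨Qmat, Matrix.isUnit_det_of_left_inverse (by decide : QmatInv * Qmat = 1), by decide⟩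
end

section
/- Let T = ℤ^17 with Gram matrix G of U⊕U⊕E_8⊕A_1^5, with e,f the basis of the first U block and r_1,…,r_5 the A_1 basis vectors, and let r = 2(e+f) + r_1 + r_2 + r_3 + r_4 + r_5 (so rᵀGr = -2). Then the orthogonal complement r^⊥ = {x ∈ ℤ^17 : xᵀGr = 0}, with the restricted form, is a rank-16 lattice isometric to U⊕U(2)⊕E_8⊕D_4. -/
open Matrix

/-- The basis vector `e` of the first copy of `U` in `T`. -/
def eU : Fin 17 → ℤ := Pi.single 0 1

/-- The basis vector `f` of the first copy of `U` in `T`. -/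
def fU : Fin 17 → ℤ := Pi.single 1 1

/-- The basis vectors `r₁, …, r₅` of the five copies of `A₁` in `T`. -/
def rA (k : Fin 5) : Fin 17 → ℤ := Pi.single ⟨12 + (k : ℕ), by have := k.isLt; omega⟩ 1

/-- The vector `r = 2(e+f) + r₁ + r₂ + r₃ + r₄ + r₅` (of square `-2`). -/
def rVec : Fin 17 → ℤ := 2 • (eU + fU) + ∑ k : Fin 5, rA k

/-- Gram matrix of `U ⊕ U(2) ⊕ E₈ ⊕ D₄`. -/
def gramT' : Matrix (Fin 16) (Fin 16) ℤ :=
  blockSum gramU (blockSum gramU2 (blockSum gramE8 gramD4))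

/-- The embedding matrix: columns are a basis of `r^⊥` in `T`. -/
def Mmat : Matrix (Fin 17) (Fin 16) ℤ :=
  !![0, 0, 2, 2, 0, 0, 0, 0, 0, 0, 0, 0, 1, -2, 1, 1;
    0, 0, 2, 2, 0, 0, 0, 0, 0, 0, 0, 0, -1, -1, 1, 1;
    1, 0, 0, 0, 0, 0, 0, 0, 0, 0, 0, 0, 0, 0, 0, 0;
    0, 1, 0, 0, 0, 0, 0, 0, 0, 0, 0, 0, 0, 0, 0, 0;
    0, 0, 0, 0, 1, 0, 0, 0, 0, 0, 0, 0, 0, 0, 0, 0;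
    0, 0, 0, 0, 0, 1, 0, 0, 0, 0, 0, 0, 0, 0, 0, 0;
    0, 0, 0, 0, 0, 0, 1, 0, 0, 0, 0, 0, 0, 0, 0, 0;
    0, 0, 0, 0, 0, 0, 0, 1, 0, 0, 0, 0, 0, 0, 0, 0;
    0, 0, 0, 0, 0, 0, 0, 0, 1, 0, 0, 0, 0, 0, 0, 0;
    0, 0, 0, 0, 0, 0, 0, 0, 0, 1, 0, 0, 0, 0, 0, 0;
    0, 0, 0, 0, 0, 0, 0, 0, 0, 0, 1, 0, 0, 0, 0, 0;
    0, 0, 0, 0, 0, 0, 0, 0, 0, 0, 0, 1, 0, 0, 0, 0;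
    0, 0, 1, 1, 0, 0, 0, 0, 0, 0, 0, 0, 0, -1, 1, 1;
    0, 0, 1, 1, 0, 0, 0, 0, 0, 0, 0, 0, 0, -1, 1, 0;
    0, 0, 1, 1, 0, 0, 0, 0, 0, 0, 0, 0, 0, -1, 0, 1;
    0, 0, 1, 0, 0, 0, 0, 0, 0, 0, 0, 0, 0, 0, 0, 0;
    0, 0, 0, 1, 0, 0, 0, 0, 0, 0, 0, 0, 0, 0, 0, 0]

/-- A left inverse of `Mmat`. -/
def Lmat : Matrix (Fin 16) (Fin 17) ℤ :=
  !![0, 0, 1, 0, 0, 0, 0, 0, 0, 0, 0, 0, 0, 0, 0, 0, 0;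
    0, 0, 0, 1, 0, 0, 0, 0, 0, 0, 0, 0, 0, 0, 0, 0, 0;
    0, 0, 0, 0, 0, 0, 0, 0, 0, 0, 0, 0, 0, 0, 0, 1, 0;
    0, 0, 0, 0, 0, 0, 0, 0, 0, 0, 0, 0, 0, 0, 0, 0, 1;
    0, 0, 0, 0, 1, 0, 0, 0, 0, 0, 0, 0, 0, 0, 0, 0, 0;
    0, 0, 0, 0, 0, 1, 0, 0, 0, 0, 0, 0, 0, 0, 0, 0, 0;
    0, 0, 0, 0, 0, 0, 1, 0, 0, 0, 0, 0, 0, 0, 0, 0, 0;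
    0, 0, 0, 0, 0, 0, 0, 1, 0, 0, 0, 0, 0, 0, 0, 0, 0;
    0, 0, 0, 0, 0, 0, 0, 0, 1, 0, 0, 0, 0, 0, 0, 0, 0;
    0, 0, 0, 0, 0, 0, 0, 0, 0, 1, 0, 0, 0, 0, 0, 0, 0;
    0, 0, 0, 0, 0, 0, 0, 0, 0, 0, 1, 0, 0, 0, 0, 0, 0;
    0, 0, 0, 0, 0, 0, 0, 0, 0, 0, 0, 1, 0, 0, 0, 0, 0;
    0, -1, 0, 0, 0, 0, 0, 0, 0, 0, 0, 0, 1, 0, 0, 1, 1;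
    0, 0, 0, 0, 0, 0, 0, 0, 0, 0, 0, 0, 1, -1, -1, 1, 1;
    0, 0, 0, 0, 0, 0, 0, 0, 0, 0, 0, 0, 1, 0, -1, 0, 0;
    0, 0, 0, 0, 0, 0, 0, 0, 0, 0, 0, 0, 1, -1, 0, 0, 0]

/-- Half of `gramT.mulVec rVec`. -/
def dVec : Fin 17 → ℤ := ![1, 1, 0, 0, 0, 0, 0, 0, 0, 0, 0, 0, -1, -1, -1, -1, -1]

lemma cVec_eq : gramT.mulVec rVec = 2 • dVec := by decide

lemma LM_eq : Lmat * Mmat = 1 := by decide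

lemma ML_eq : Mmat * Lmat = 1 - Matrix.vecMulVec (Pi.single 0 1) dVec := by decide

lemma MtcM : Mmatᵀ * gramT * Mmat = gramT' := by decide

lemma Mtc : Mmatᵀ.mulVec (gramT.mulVec rVec) = 0 := by decide

lemma vecMulVec_mulVec' (u v x : Fin 17 → ℤ) :
    (Matrix.vecMulVec u v).mulVec x = (v ⬝ᵥ x) • u := by
  funext i
  simp [Matrix.vecMulVec, Matrix.mulVec, dotProduct, Finset.mul_sum, mul_comm,
    mul_left_comm]

/-- The orthogonal complement of `r = 2(e+f) + r₁ + ⋯ + r₅` in `T = U ⊕ U ⊕ E₈ ⊕ A₁⁵`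
is a rank-16 lattice isometric to `U ⊕ U(2) ⊕ E₈ ⊕ D₄`. -/
theorem complement_of_r_in_T :
    rVec ⬝ᵥ gramT.mulVec rVec = -2 ∧
    ∃ φ : (Fin 16 → ℤ) →ₗ[ℤ] (Fin 17 → ℤ),
      Function.Injective φ ∧
      Set.range φ = {x : Fin 17 → ℤ | x ⬝ᵥ gramT.mulVec rVec = 0} ∧
      ∀ x y : Fin 16 → ℤ, (φ x) ⬝ᵥ gramT.mulVec (φ y) = x ⬝ᵥ gramT'.mulVec y := by
  constructor
  · decide
  · refine ⟨Mmat.mulVecLin, ?_, ?_, ?_⟩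
    · intro x y h
      have h2 : Lmat.mulVec (Mmat.mulVec x) = Lmat.mulVec (Mmat.mulVec y) := by
        simpa using congrArg Lmat.mulVec h
      simpa [Matrix.mulVec_mulVec, LM_eq] using h2
    · ext x
      constructor
      · rintro ⟨y, rfl⟩
        show (Mmat.mulVecLin y) ⬝ᵥ gramT.mulVec rVec = 0
        have h1 : Mmat.mulVec y ⬝ᵥ gramT.mulVec rVec
            = y ⬝ᵥ Mmatᵀ.mulVec (gramT.mulVec rVec) := by
          rw [Matrix.dotProduct_mulVec y Mmatᵀ, Matrix.vecMul_transpose]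
        rw [Mtc] at h1
        simpa [Matrix.mulVecLin_apply] using h1
      · intro hx
        have hx' : x ⬝ᵥ gramT.mulVec rVec = 0 := hx
        have hd : dVec ⬝ᵥ x = 0 := by
          rw [cVec_eq, dotProduct_smul, dotProduct_comm] at hx'
          have h2 : (2 : ℤ) * (dVec ⬝ᵥ x) = 0 := by simpa [smul_eq_mul] using hx'
          omega
        refine ⟨Lmat.mulVec x, ?_⟩
        show Mmat.mulVec (Lmat.mulVec x) = x
        rw [Matrix.mulVec_mulVec, ML_eq, Matrix.sub_mulVec, Matrix.one_mulVec,
          vecMulVec_mulVec', hd]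
        simp
    · intro x y
      show Mmat.mulVec x ⬝ᵥ gramT.mulVec (Mmat.mulVec y) = x ⬝ᵥ gramT'.mulVec y
      rw [← MtcM, Matrix.mul_assoc, ← Matrix.mulVec_mulVec,
        Matrix.dotProduct_mulVec x Mmatᵀ, Matrix.vecMul_transpose, ← Matrix.mulVec_mulVec]
end
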